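/- Let m be divisible by 3 and n = 2^m - 1 (so 7 | n). The binary cyclic code C of length n with check polynomial h(x) = 1 + x^{n/7} + x^{3n/7} has dimension k = 3n/7 and every coordinate i has 3 parity checks of weight 3 in C⊥ that pairwise intersect exactly in {i}: C is a 3-available-2-local LRC. -/

import Mathlib

open Polynomial

/-- The polynomial associated with a binary word. -/
noncomputable def wordToPoly {n : ℕ} (c : Fin n → ZMod 2) : Polynomial (ZMod 2) :=
  ∑ i : Fin n, Polynomial.C (c i) * Polynomial.X ^ (i : ℕ)



lemma wtp_coeff {n : ℕ} (c : Fin n → ZMod 2) (j : ℕ) :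
    (wordToPoly c).coeff j = if h : j < n then c ⟨j, h⟩ else 0 := by
  classical
  rw [wordToPoly, finset_sum_coeff]
  simp only [coeff_C_mul, coeff_X_pow, mul_ite, mul_one, mul_zero]
  split_ifs with h
  · rw [Finset.sum_eq_single (⟨j, h⟩ : Fin n)]
    · simp
    · intro b _ hb
      rw [if_neg]
      intro hbj
      exact hb (Fin.ext hbj.symm)
    · simp
  · apply Finset.sum_eq_zero
    intro i _
    rw [if_neg]
    omega

lemma wtp_natDegree_le {n : ℕ} (hn : 0 < n) (c : Fin n → ZMod 2) :
    (wordToPoly c).natDegree ≤ n - 1 := by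
  rw [natDegree_le_iff_coeff_eq_zero]
  intro m hm
  rw [wtp_coeff]
  rw [dif_neg]
  omega

lemma wtp_add {n : ℕ} (a b : Fin n → ZMod 2) :
    wordToPoly (a + b) = wordToPoly a + wordToPoly b := by
  simp [wordToPoly, C_add, add_mul, Finset.sum_add_distrib]

lemma wtp_smul {n : ℕ} (r : ZMod 2) (a : Fin n → ZMod 2) :
    wordToPoly (r • a) = r • wordToPoly a := by
  simp [wordToPoly, smul_eq_C_mul, Finset.mul_sum, mul_assoc]

lemma key_id (t : Polynomial (ZMod 2)) :
    (t^4 + t^2 + t + 1) * (1 + t + t^3) = t^7 - 1 := by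
  have h2 : (2 : Polynomial (ZMod 2)) = 0 := by
    have h : (2 : Polynomial (ZMod 2)) = C (2 : ZMod 2) := by
      rw [map_ofNat]
    rw [h, show (2 : ZMod 2) = 0 from rfl, map_zero]
  linear_combination (t^5 + t^4 + t^3 + t^2 + t + 1) * h2




lemma modred (a n : ℕ) (h1 : n ≤ a) (h2 : a < 2*n) : a % n = a - n := by
  conv_lhs => rw [show a = a - n + n from by omega]
  rw [Nat.add_mod_right]
  exact Nat.mod_eq_of_lt (by omega)

lemma hpoly_natDegree_le (s : ℕ) :
    (1 + X ^ s + X ^ (3*s) : Polynomial (ZMod 2)).natDegree ≤ 3*s := by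
  compute_degree
  · simp only [sup_le_iff]
    omega

lemma Xn_natDegree (n : ℕ) : (X ^ n - 1 : Polynomial (ZMod 2)).natDegree = n := by
  rw [show (1 : Polynomial (ZMod 2)) = C 1 from (map_one C).symm]
  exact natDegree_X_pow_sub_C

lemma Xn_ne_zero (n : ℕ) (hn : 0 < n) : (X ^ n - 1 : Polynomial (ZMod 2)) ≠ 0 := by
  intro h0
  have := Xn_natDegree n
  rw [h0] at this
  simp at this
  omega

lemma check_sum (s : ℕ) (hs : 1 ≤ s) (c : Fin (7*s) → ZMod 2)
    (hdvd : (X ^ (7*s) - 1 : Polynomial (ZMod 2)) ∣ wordToPoly c * (1 + X ^ s + X ^ (3*s)))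
    (k : ℕ) (hk : k < 7*s) :
    c ⟨k, hk⟩ + c ⟨(k + 6*s) % (7*s), Nat.mod_lt _ (by omega)⟩
      + c ⟨(k + 4*s) % (7*s), Nat.mod_lt _ (by omega)⟩ = 0 := by
  obtain ⟨q, hq⟩ := hdvd
  have hwdeg : (wordToPoly c).natDegree ≤ 7*s - 1 := wtp_natDegree_le (by omega) c
  have hqc : ∀ j, 7*s ≤ j → q.coeff j = 0 := by
    intro j hj
    rcases eq_or_ne q 0 with h0 | h0
    · simp [h0]
    apply coeff_eq_zero_of_natDegree_lt
    have h1 : (wordToPoly c * (1 + X ^ s + X ^ (3*s))).natDegree ≤ (7*s-1) + 3*s :=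
      le_trans natDegree_mul_le (Nat.add_le_add hwdeg (hpoly_natDegree_le s))
    have h2 : ((X ^ (7*s) - 1 : Polynomial (ZMod 2)) * q).natDegree = 7*s + q.natDegree := by
      rw [natDegree_mul (Xn_ne_zero _ (by omega)) h0, Xn_natDegree]
    rw [hq, h2] at h1
    omega
  have hPco : ∀ t, (wordToPoly c * (1 + X ^ s + X ^ (3*s))).coeff t =
      (wordToPoly c).coeff t + (if s ≤ t then (wordToPoly c).coeff (t - s) else 0)
      + (if 3*s ≤ t then (wordToPoly c).coeff (t - 3*s) else 0) := by
    intro t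
    rw [mul_add, mul_add, mul_one, coeff_add, coeff_add,
      coeff_mul_X_pow', coeff_mul_X_pow']
  have hQco : ∀ t, ((X ^ (7*s) - 1 : Polynomial (ZMod 2)) * q).coeff t =
      (if 7*s ≤ t then q.coeff (t - 7*s) else 0) - q.coeff t := by
    intro t
    have e : (X ^ (7*s) - 1 : Polynomial (ZMod 2)) * q = q * X ^ (7*s) - q := by ring
    rw [e, coeff_sub, coeff_mul_X_pow']
  have E : (wordToPoly c * (1 + X ^ s + X ^ (3*s))).coeff k
      + (wordToPoly c * (1 + X ^ s + X ^ (3*s))).coeff (k + 7*s) = 0 := by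
    rw [hq, hQco, hQco, if_neg (by omega), if_pos (by omega), hqc (k+7*s) (by omega)]
    simp
    exact CharTwo.add_self_eq_zero _
  rw [hPco, hPco, if_pos (show s ≤ k + 7*s by omega),
    if_pos (show 3*s ≤ k + 7*s by omega)] at E
  have w0 : (wordToPoly c).coeff (k + 7*s) = 0 := by rw [wtp_coeff, dif_neg (by omega)]
  have wk : (wordToPoly c).coeff k = c ⟨k, hk⟩ := by rw [wtp_coeff, dif_pos hk]
  rcases le_or_gt s k with h1 | h1 <;> rcases le_or_gt (3*s) k with h2 | h2
  · have e6 : (k + 6*s) % (7*s) = k - s := by rw [modred _ _ (by omega) (by omega)]; omega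
    have e4 : (k + 4*s) % (7*s) = k - 3*s := by rw [modred _ _ (by omega) (by omega)]; omega
    simp only [e6, e4]
    have g1 : c ⟨k - s, by omega⟩ = (wordToPoly c).coeff (k - s) := by
      rw [wtp_coeff, dif_pos (by omega)]
    have g2 : c ⟨k - 3*s, by omega⟩ = (wordToPoly c).coeff (k - 3*s) := by
      rw [wtp_coeff, dif_pos (by omega)]
    have w1 : (wordToPoly c).coeff (k + 7*s - s) = 0 := by rw [wtp_coeff, dif_neg (by omega)]
    have w2 : (wordToPoly c).coeff (k + 7*s - 3*s) = 0 := by rw [wtp_coeff, dif_neg (by omega)]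
    rw [if_pos h1, if_pos h2, wk, w0, w1, w2] at E
    rw [g1, g2]
    linear_combination E
  · have e6 : (k + 6*s) % (7*s) = k - s := by rw [modred _ _ (by omega) (by omega)]; omega
    have e4 : (k + 4*s) % (7*s) = k + 4*s := Nat.mod_eq_of_lt (by omega)
    simp only [e6, e4]
    have g1 : c ⟨k - s, by omega⟩ = (wordToPoly c).coeff (k - s) := by
      rw [wtp_coeff, dif_pos (by omega)]
    have g2 : c ⟨k + 4*s, by omega⟩ = (wordToPoly c).coeff (k + 7*s - 3*s) := by
      rw [show k + 7*s - 3*s = k + 4*s from by omega, wtp_coeff, dif_pos (by omega)]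
    have w1 : (wordToPoly c).coeff (k + 7*s - s) = 0 := by rw [wtp_coeff, dif_neg (by omega)]
    rw [if_pos h1, if_neg (by omega), wk, w0, w1] at E
    rw [g1, g2]
    linear_combination E
  · omega
  · have e6 : (k + 6*s) % (7*s) = k + 6*s := Nat.mod_eq_of_lt (by omega)
    have e4 : (k + 4*s) % (7*s) = k + 4*s := Nat.mod_eq_of_lt (by omega)
    simp only [e6, e4]
    have g1 : c ⟨k + 6*s, by omega⟩ = (wordToPoly c).coeff (k + 7*s - s) := by
      rw [show k + 7*s - s = k + 6*s from by omega, wtp_coeff, dif_pos (by omega)]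
    have g2 : c ⟨k + 4*s, by omega⟩ = (wordToPoly c).coeff (k + 7*s - 3*s) := by
      rw [show k + 7*s - 3*s = k + 4*s from by omega, wtp_coeff, dif_pos (by omega)]
    rw [if_neg (by omega), if_neg (by omega), wk, w0] at E
    rw [g1, g2]
    linear_combination E







lemma gh_eq (s : ℕ) :
    (X^(4*s) + X^(2*s) + X^s + 1 : Polynomial (ZMod 2)) * (1 + X^s + X^(3*s))
      = X^(7*s) - 1 := by
  have e : ∀ a : ℕ, (X : Polynomial (ZMod 2))^(a*s) = (X^s)^a := fun a => by
    rw [← pow_mul, mul_comm]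
  rw [e 4, e 2, e 3, e 7]
  exact key_id _

lemma hpoly_ne_zero (s : ℕ) (hs : 1 ≤ s) :
    (1 + X ^ s + X ^ (3*s) : Polynomial (ZMod 2)) ≠ 0 := by
  intro h0
  have : (1 + X ^ s + X ^ (3*s) : Polynomial (ZMod 2)).coeff 0 = 1 := by
    rw [coeff_add, coeff_add, coeff_one, coeff_X_pow, coeff_X_pow,
      if_pos rfl, if_neg (by omega), if_neg (by omega)]
    norm_num
  rw [h0] at this
  simp at this

lemma dim_eq (s : ℕ) (hs : 1 ≤ s)
    (C : Submodule (ZMod 2) (Fin (7*s) → ZMod 2))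
    (hC : ∀ c : Fin (7*s) → ZMod 2, c ∈ C ↔
      (X^(7*s) - 1 : Polynomial (ZMod 2)) ∣ wordToPoly c * (1 + X^s + X^(3*s))) :
    Module.finrank (ZMod 2) C = 3*s := by
  classical
  set g : Polynomial (ZMod 2) := X^(4*s) + X^(2*s) + X^s + 1 with hgdef
  have hgc : g.coeff (4*s) = 1 := by
    rw [hgdef, coeff_add, coeff_add, coeff_add, coeff_X_pow, coeff_X_pow, coeff_X_pow,
      coeff_one, if_pos rfl, if_neg (by omega), if_neg (by omega), if_neg (by omega)]
    norm_num
  have hg0 : g ≠ 0 := fun h0 => by rw [h0] at hgc; simp at hgc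
  have hgdeg : g.natDegree = 4*s := by
    apply le_antisymm
    · rw [hgdef]
      compute_degree
      all_goals simp only [sup_le_iff] <;> omega
    · apply le_natDegree_of_ne_zero
      rw [hgc]
      norm_num
  have hprod0 : ∀ (d : Fin (3*s) → ZMod 2) (j : ℕ), 7*s ≤ j →
      (wordToPoly d * g).coeff j = 0 := by
    intro d j hj
    apply coeff_eq_zero_of_natDegree_lt
    calc (wordToPoly d * g).natDegree ≤ (wordToPoly d).natDegree + g.natDegree :=
          natDegree_mul_le
      _ ≤ (3*s - 1) + 4*s := by
          have := wtp_natDegree_le (by omega) d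
          omega
      _ < j := by omega
  let Φ : (Fin (3*s) → ZMod 2) →ₗ[ZMod 2] (Fin (7*s) → ZMod 2) :=
    { toFun := fun d i => (wordToPoly d * g).coeff ↑i
      map_add' := by
        intro a b
        funext i
        show (wordToPoly (a + b) * g).coeff ↑i = _
        rw [wtp_add, add_mul, coeff_add]
        rfl
      map_smul' := by
        intro r a
        funext i
        show (wordToPoly (r • a) * g).coeff ↑i = _
        rw [wtp_smul, smul_mul_assoc, coeff_smul]
        rfl }
  have hΦ : ∀ (d : Fin (3*s) → ZMod 2) (i : Fin (7*s)),
      Φ d i = (wordToPoly d * g).coeff ↑i := fun _ _ => rfl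
  have hwtpΦ : ∀ d, wordToPoly (Φ d) = wordToPoly d * g := by
    intro d
    ext j
    rw [wtp_coeff]
    split_ifs with h
    · rfl
    · exact (hprod0 d j (by omega)).symm
  have hrange : LinearMap.range Φ = C := by
    ext c
    rw [LinearMap.mem_range, hC]
    constructor
    · rintro ⟨d, rfl⟩
      rw [hwtpΦ d, mul_assoc, gh_eq s]
      exact dvd_mul_left _ _
    · intro hdvd
      rw [← gh_eq s, mul_dvd_mul_iff_right (hpoly_ne_zero s hs)] at hdvd
      obtain ⟨q, hqe⟩ := hdvd
      have hq3 : ∀ j, 3*s ≤ j → q.coeff j = 0 := by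
        intro j hj
        rcases eq_or_ne q 0 with h0 | h0
        · simp [h0]
        apply coeff_eq_zero_of_natDegree_lt
        have h1 : (wordToPoly c).natDegree ≤ 7*s - 1 := wtp_natDegree_le (by omega) c
        rw [hqe, natDegree_mul hg0 h0, hgdeg] at h1
        omega
      refine ⟨fun j => q.coeff ↑j, ?_⟩
      have hq : wordToPoly (fun j : Fin (3*s) => q.coeff ↑j) = q := by
        ext j
        rw [wtp_coeff]
        split_ifs with h
        · rfl
        · exact (hq3 j (by omega)).symm
      funext i
      rw [hΦ, hq, mul_comm, ← hqe, wtp_coeff, dif_pos i.isLt]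
  have hinj : Function.Injective Φ := by
    rw [← LinearMap.ker_eq_bot]
    rw [LinearMap.ker_eq_bot']
    intro d hd
    have hprodz : wordToPoly d * g = 0 := by
      ext j
      rcases lt_or_ge j (7*s) with h | h
      · have := congrFun hd ⟨j, h⟩
        rw [hΦ] at this
        simpa using this
      · simp [hprod0 d j h]
    have hwz : wordToPoly d = 0 := by
      rcases mul_eq_zero.mp hprodz with h | h
      · exact h
      · exact absurd h hg0
    funext j
    have := wtp_coeff d ↑j
    rw [hwz, dif_pos j.isLt] at this
    simp only [coeff_zero] at this
    rw [Pi.zero_apply]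
    rw [← this]
  rw [← hrange, LinearMap.finrank_range_of_inj hinj]
  simp



lemma mod_inj (n i a b : ℕ) (ha : a < n) (hb : b < n)
    (h : (i + a) % n = (i + b) % n) : a = b := by
  have h2 : a ≡ b [MOD n] := Nat.ModEq.add_left_cancel' i h
  have h3 : a % n = b % n := h2
  rwa [Nat.mod_eq_of_lt ha, Nat.mod_eq_of_lt hb] at h3

lemma norm3 {n : ℕ} (A B C : Fin n) (hAB : A ≠ B) (hAC : A ≠ C) (hBC : B ≠ C) :
    hammingNorm (fun j => (if j = A then (1:ZMod 2) else 0) + (if j = B then 1 else 0)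
      + (if j = C then 1 else 0)) = 3 := by
  classical
  have hne : ∀ j : Fin n, ((if j = A then (1:ZMod 2) else 0) + (if j = B then 1 else 0)
      + (if j = C then 1 else 0)) ≠ 0 ↔ (j = A ∨ j = B ∨ j = C) := by
    intro j
    split_ifs with h1 h2 h3 <;> simp_all <;> decide
  rw [hammingNorm]
  have hset : (Finset.univ.filter fun j : Fin n =>
      ((if j = A then (1:ZMod 2) else 0) + (if j = B then 1 else 0)
        + (if j = C then 1 else 0)) ≠ 0) = {A, B, C} := by
    ext j
    simp only [Finset.mem_filter, Finset.mem_univ, true_and, Finset.mem_insert,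
      Finset.mem_singleton]
    exact hne j
  rw [hset, Finset.card_insert_of_notMem (by simp [hAB, hAC]),
    Finset.card_insert_of_notMem (by simp [hBC]), Finset.card_singleton]

lemma ind3 {n : ℕ} (A B C : Fin n) (hAB : A ≠ B) (hAC : A ≠ C) (hBC : B ≠ C) (j : Fin n) :
    ((if j = A then (1:ZMod 2) else 0) + (if j = B then 1 else 0)
      + (if j = C then 1 else 0)) ≠ 0 ↔ (j = A ∨ j = B ∨ j = C) := by
  split_ifs with h1 h2 h3 <;> simp_all

lemma checks (s : ℕ) (hs : 1 ≤ s)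
    (C : Submodule (ZMod 2) (Fin (7*s) → ZMod 2))
    (hC : ∀ c : Fin (7*s) → ZMod 2, c ∈ C ↔
      (X^(7*s) - 1 : Polynomial (ZMod 2)) ∣ wordToPoly c * (1 + X^s + X^(3*s)))
    (i : Fin (7*s)) :
    ∃ y : Fin 3 → (Fin (7*s) → ZMod 2),
      (∀ a : Fin 3, (∀ x ∈ C, ∑ j, x j * y a j = 0) ∧
          hammingNorm (y a) = 3 ∧ y a i ≠ 0) ∧
      (∀ a b : Fin 3, a ≠ b → ∀ j, y a j ≠ 0 → y b j ≠ 0 → j = i) := by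
  classical
  have hn : 0 < 7*s := by omega
  set π : ℕ → Fin (7*s) := fun t => ⟨(↑i + t*s) % (7*s), Nat.mod_lt _ hn⟩ with hπ
  have hπ0 : π 0 = i := by
    apply Fin.ext
    show (↑i + 0*s) % (7*s) = ↑i
    rw [Nat.zero_mul, Nat.add_zero, Nat.mod_eq_of_lt i.isLt]
  have hdist : ∀ t t' : ℕ, t < 7 → t' < 7 → π t = π t' → t = t' := by
    intro t t' ht ht' he
    have hv : (↑i + t*s) % (7*s) = (↑i + t'*s) % (7*s) := congrArg Fin.val he
    have hts : t*s < 7*s := by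
      calc t*s ≤ 6*s := Nat.mul_le_mul_right s (by omega)
        _ < 7*s := by omega
    have hts' : t'*s < 7*s := by
      calc t'*s ≤ 6*s := Nat.mul_le_mul_right s (by omega)
        _ < 7*s := by omega
    have := mod_inj (7*s) ↑i (t*s) (t'*s) hts hts' hv
    exact Nat.eq_of_mul_eq_mul_right (by omega) this
  have πne : ∀ t t' : ℕ, t < 7 → t' < 7 → t ≠ t' → π t ≠ π t' :=
    fun t t' ht ht' hne he => hne (hdist t t' ht ht' he)
  set F : ℕ → ℕ → (Fin (7*s) → ZMod 2) := fun t1 t2 j =>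
    (if j = π 0 then 1 else 0) + (if j = π t1 then 1 else 0)
      + (if j = π t2 then 1 else 0) with hF
  have hsum : ∀ (t1 t2 : ℕ) (x : Fin (7*s) → ZMod 2),
      ∑ j, x j * F t1 t2 j = x (π 0) + x (π t1) + x (π t2) := by
    intro t1 t2 x
    simp only [hF, mul_add, mul_ite, mul_one, mul_zero, Finset.sum_add_distrib,
      Finset.sum_ite_eq', Finset.mem_univ, if_true]
  have hnorm : ∀ t1 t2 : ℕ, t1 < 7 → t2 < 7 → t1 ≠ 0 → t2 ≠ 0 → t1 ≠ t2 →
      hammingNorm (F t1 t2) = 3 := by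
    intro t1 t2 h1 h2 h3 h4 h5
    exact norm3 _ _ _ (πne 0 t1 (by omega) h1 (Ne.symm h3)) (πne 0 t2 (by omega) h2 (Ne.symm h4))
      (πne t1 t2 h1 h2 h5)
  have hati : ∀ t1 t2 : ℕ, t1 < 7 → t2 < 7 → t1 ≠ 0 → t2 ≠ 0 → F t1 t2 i ≠ 0 := by
    intro t1 t2 h1 h2 h3 h4
    have h0 : i = π 0 := hπ0.symm
    rw [hF]
    simp only
    rw [if_pos h0, if_neg (fun hh : i = π t1 => πne 0 t1 (by omega) h1 (Ne.symm h3) (h0 ▸ hh)),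
      if_neg (fun hh : i = π t2 => πne 0 t2 (by omega) h2 (Ne.symm h4) (h0 ▸ hh))]
    decide
  have hsupp : ∀ t1 t2 : ℕ, t1 < 7 → t2 < 7 → t1 ≠ 0 → t2 ≠ 0 → t1 ≠ t2 →
      ∀ j, F t1 t2 j ≠ 0 → j = π 0 ∨ j = π t1 ∨ j = π t2 := by
    intro t1 t2 h1 h2 h3 h4 h5 j hj
    exact (ind3 _ _ _ (πne 0 t1 (by omega) h1 (Ne.symm h3)) (πne 0 t2 (by omega) h2 (Ne.symm h4))
      (πne t1 t2 h1 h2 h5) j).mp hj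
  -- orthogonality for each of the three checks
  have ortho : ∀ x ∈ C, ∀ t1 t2 : ℕ,
      x (π 0) + x (π t1) + x (π t2) = 0 →
      ∑ j, x j * F t1 t2 j = 0 := by
    intro x hx t1 t2 hzero
    rw [hsum]
    exact hzero
  have key : ∀ x ∈ C, (x (π 0) + x (π 6) + x (π 4) = 0) ∧
      (x (π 0) + x (π 1) + x (π 5) = 0) ∧ (x (π 0) + x (π 3) + x (π 2) = 0) := by
    intro x hx
    have hdvd := (hC x).mp hx
    refine ⟨?_, ?_, ?_⟩
    · have hcs := check_sum s hs x hdvd ↑i i.isLt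
      have e0 : (⟨(↑i : ℕ), i.isLt⟩ : Fin (7*s)) = π 0 := by rw [hπ0]
      have e6 : (⟨((↑i : ℕ) + 6*s) % (7*s), Nat.mod_lt _ (by omega)⟩ : Fin (7*s)) = π 6 := rfl
      have e4 : (⟨((↑i : ℕ) + 4*s) % (7*s), Nat.mod_lt _ (by omega)⟩ : Fin (7*s)) = π 4 := rfl
      rw [e0, e6, e4] at hcs
      exact hcs
    · have hcs := check_sum s hs x hdvd ↑(π 1) (π 1).isLt
      have e1 : (⟨(↑(π 1) : ℕ), (π 1).isLt⟩ : Fin (7*s)) = π 1 := rfl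
      have e0 : (⟨((↑(π 1) : ℕ) + 6*s) % (7*s), Nat.mod_lt _ (by omega)⟩ : Fin (7*s)) = π 0 := by
        apply Fin.ext
        show (((↑i : ℕ) + 1*s) % (7*s) + 6*s) % (7*s) = ((↑i : ℕ) + 0*s) % (7*s)
        rw [Nat.mod_add_mod, show (↑i : ℕ) + 1*s + 6*s = ((↑i : ℕ) + 0*s) + 7*s from by omega,
          Nat.add_mod_right]
      have e5 : (⟨((↑(π 1) : ℕ) + 4*s) % (7*s), Nat.mod_lt _ (by omega)⟩ : Fin (7*s)) = π 5 := by
        apply Fin.ext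
        show (((↑i : ℕ) + 1*s) % (7*s) + 4*s) % (7*s) = ((↑i : ℕ) + 5*s) % (7*s)
        rw [Nat.mod_add_mod]
        congr 1
        omega
      rw [e1, e0, e5] at hcs
      linear_combination hcs
    · have hcs := check_sum s hs x hdvd ↑(π 3) (π 3).isLt
      have e3 : (⟨(↑(π 3) : ℕ), (π 3).isLt⟩ : Fin (7*s)) = π 3 := rfl
      have e2 : (⟨((↑(π 3) : ℕ) + 6*s) % (7*s), Nat.mod_lt _ (by omega)⟩ : Fin (7*s)) = π 2 := by
        apply Fin.ext
        show (((↑i : ℕ) + 3*s) % (7*s) + 6*s) % (7*s) = ((↑i : ℕ) + 2*s) % (7*s)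
        rw [Nat.mod_add_mod, show (↑i : ℕ) + 3*s + 6*s = ((↑i : ℕ) + 2*s) + 7*s from by omega,
          Nat.add_mod_right]
      have e0 : (⟨((↑(π 3) : ℕ) + 4*s) % (7*s), Nat.mod_lt _ (by omega)⟩ : Fin (7*s)) = π 0 := by
        apply Fin.ext
        show (((↑i : ℕ) + 3*s) % (7*s) + 4*s) % (7*s) = ((↑i : ℕ) + 0*s) % (7*s)
        rw [Nat.mod_add_mod, show (↑i : ℕ) + 3*s + 4*s = ((↑i : ℕ) + 0*s) + 7*s from by omega,
          Nat.add_mod_right]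
      rw [e3, e2, e0] at hcs
      linear_combination hcs
  refine ⟨![F 6 4, F 1 5, F 3 2], ?_, ?_⟩
  · intro a
    fin_cases a
    · exact ⟨fun x hx => ortho x hx 6 4 ((key x hx).1),
        hnorm 6 4 (by omega) (by omega) (by omega) (by omega) (by omega),
        hati 6 4 (by omega) (by omega) (by omega) (by omega)⟩
    · exact ⟨fun x hx => ortho x hx 1 5 ((key x hx).2.1),
        hnorm 1 5 (by omega) (by omega) (by omega) (by omega) (by omega),
        hati 1 5 (by omega) (by omega) (by omega) (by omega)⟩
    · exact ⟨fun x hx => ortho x hx 3 2 ((key x hx).2.2),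
        hnorm 3 2 (by omega) (by omega) (by omega) (by omega) (by omega),
        hati 3 2 (by omega) (by omega) (by omega) (by omega)⟩
  · intro a b hab j hja hjb
    have resolve : ∀ t1 t2 t1' t2' : ℕ, t1 < 7 → t2 < 7 → t1' < 7 → t2' < 7 →
        t1 ≠ 0 → t2 ≠ 0 → t1' ≠ 0 → t2' ≠ 0 → t1 ≠ t2 → t1' ≠ t2' →
        t1 ≠ t1' → t1 ≠ t2' → t2 ≠ t1' → t2 ≠ t2' →
        F t1 t2 j ≠ 0 → F t1' t2' j ≠ 0 → j = i := by
      intro t1 t2 t1' t2' a1 a2 a3 a4 b1 b2 b3 b4 c1 c2 d1 d2 d3 d4 hj1 hj2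
      rcases hsupp t1 t2 a1 a2 b1 b2 c1 j hj1 with rfl | rfl | rfl
      · exact hπ0 ▸ rfl
      · rcases hsupp t1' t2' a3 a4 b3 b4 c2 _ hj2 with he | he | he
        · exact absurd (hdist _ _ a1 (by omega) he) b1
        · exact absurd (hdist _ _ a1 a3 he) d1
        · exact absurd (hdist _ _ a1 a4 he) d2
      · rcases hsupp t1' t2' a3 a4 b3 b4 c2 _ hj2 with he | he | he
        · exact absurd (hdist _ _ a2 (by omega) he) b2
        · exact absurd (hdist _ _ a2 a3 he) d3
        · exact absurd (hdist _ _ a2 a4 he) d4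
    fin_cases a <;> fin_cases b <;> simp only [Matrix.cons_val_zero, Matrix.cons_val_one,
      Matrix.head_cons, Matrix.cons_val_two, Matrix.tail_cons] at hja hjb ⊢
    · exact absurd rfl hab
    · exact resolve 6 4 1 5 (by omega) (by omega) (by omega) (by omega) (by omega) (by omega)
        (by omega) (by omega) (by omega) (by omega) (by omega) (by omega) (by omega) (by omega) hja hjb
    · exact resolve 6 4 3 2 (by omega) (by omega) (by omega) (by omega) (by omega) (by omega)
        (by omega) (by omega) (by omega) (by omega) (by omega) (by omega) (by omega) (by omega) hja hjb
    · exact resolve 1 5 6 4 (by omega) (by omega) (by omega) (by omega) (by omega) (by omega)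
        (by omega) (by omega) (by omega) (by omega) (by omega) (by omega) (by omega) (by omega) hja hjb
    · exact absurd rfl hab
    · exact resolve 1 5 3 2 (by omega) (by omega) (by omega) (by omega) (by omega) (by omega)
        (by omega) (by omega) (by omega) (by omega) (by omega) (by omega) (by omega) (by omega) hja hjb
    · exact resolve 3 2 6 4 (by omega) (by omega) (by omega) (by omega) (by omega) (by omega)
        (by omega) (by omega) (by omega) (by omega) (by omega) (by omega) (by omega) (by omega) hja hjb
    · exact resolve 3 2 1 5 (by omega) (by omega) (by omega) (by omega) (by omega) (by omega)
        (by omega) (by omega) (by omega) (by omega) (by omega) (by omega) (by omega) (by omega) hja hjb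
    · exact absurd rfl hab


lemma dim_eq' (s n : ℕ) (hs : 1 ≤ s) (hn : n = 7*s)
    (C : Submodule (ZMod 2) (Fin n → ZMod 2))
    (hC : ∀ c : Fin n → ZMod 2, c ∈ C ↔
      (X^n - 1 : Polynomial (ZMod 2)) ∣ wordToPoly c * (1 + X^s + X^(3*s))) :
    Module.finrank (ZMod 2) C = 3*s := by
  subst hn
  exact dim_eq s hs C hC

lemma checks' (s n : ℕ) (hs : 1 ≤ s) (hn : n = 7*s)
    (C : Submodule (ZMod 2) (Fin n → ZMod 2))
    (hC : ∀ c : Fin n → ZMod 2, c ∈ C ↔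
      (X^n - 1 : Polynomial (ZMod 2)) ∣ wordToPoly c * (1 + X^s + X^(3*s)))
    (i : Fin n) :
    ∃ y : Fin 3 → (Fin n → ZMod 2),
      (∀ a : Fin 3, (∀ x ∈ C, ∑ j, x j * y a j = 0) ∧
          hammingNorm (y a) = 3 ∧ y a i ≠ 0) ∧
      (∀ a b : Fin 3, a ≠ b → ∀ j, y a j ≠ 0 → y b j ≠ 0 → j = i) := by
  subst hn
  exact checks s hs C hC i

/-- For `3 ∣ m` and `n = 2^m - 1` (so `7 ∣ n`), the binary cyclic code with
check polynomial `h(x) = 1 + x^{n/7} + x^{3n/7}` has dimension `3n/7` and is a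
3-available-2-local LRC: every coordinate `i` has `3` weight-3 parity checks
whose supports pairwise intersect exactly in `{i}`. -/
theorem three_available_two_local_cyclic
    (m : ℕ) (hm : 0 < m) (h3 : 3 ∣ m)
    (C : Submodule (ZMod 2) (Fin (2 ^ m - 1) → ZMod 2))
    (hC : ∀ c : Fin (2 ^ m - 1) → ZMod 2, c ∈ C ↔
      ((X : Polynomial (ZMod 2)) ^ (2 ^ m - 1) - 1) ∣
        (wordToPoly c * (1 + X ^ ((2 ^ m - 1) / 7) + X ^ (3 * (2 ^ m - 1) / 7)))) :
    Module.finrank (ZMod 2) C = 3 * (2 ^ m - 1) / 7 ∧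
    ∀ i : Fin (2 ^ m - 1), ∃ y : Fin 3 → (Fin (2 ^ m - 1) → ZMod 2),
      (∀ a : Fin 3, (∀ x ∈ C, ∑ j, x j * y a j = 0) ∧
          hammingNorm (y a) = 3 ∧ y a i ≠ 0) ∧
      (∀ a b : Fin 3, a ≠ b → ∀ j, y a j ≠ 0 → y b j ≠ 0 → j = i) := by
  obtain ⟨k, hk⟩ := h3
  have h8 : (2:ℕ)^m = 8^k := by
    rw [hk, pow_mul]
    norm_num
  have h7 : 7 ∣ 2 ^ m - 1 := by
    rw [h8]
    have hd : (8:ℕ) - 1 ∣ 8 ^ k - 1 ^ k := Nat.sub_dvd_pow_sub_pow 8 1 k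
    simpa using hd
  obtain ⟨s, hs7⟩ := h7
  have hm3 : 3 ≤ m := by omega
  have h2m : 8 ≤ 2 ^ m := by
    calc (8:ℕ) = 2^3 := by norm_num
      _ ≤ 2^m := Nat.pow_le_pow_right (by norm_num) hm3
  have hs1 : 1 ≤ s := by omega
  have e1 : (2^m - 1)/7 = s := by omega
  have e2 : 3*(2^m - 1)/7 = 3*s := by omega
  rw [e1, e2] at hC
  rw [e2]
  constructor
  · exact dim_eq' s (2^m - 1) hs1 hs7 C hC
  · intro i
    exact checks' s (2^m - 1) hs1 hs7 C hC i
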